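/- (Key integral estimate behind the Nikolskii averaging lemma) Let X be a Banach space, α ∈ (0,1), r ∈ [1,∞), and let u : [0,T] → X be Bochner r-integrable with finite Nikolskii seminorm [u] := sup_{0 < h ≤ T} h^{−α} (∫_{[0, T−h]} ‖u(s+h) − u(s)‖_X^r ds)^{1/r}. Then Σ_{m=1}^M τ^{−1} ∫_{I_m} ∫_{I_m} ‖u(s) − u(t)‖_X^r dt ds ≤ (2^{αr+1}/(αr+1)) · τ^{αr} · [u]^r. -/

import Mathlib

open MeasureTheory

/-- The Nikolskii seminorm `[f] = sup_{0 < h ≤ T} h^(-α) (∫_{[0,T-h]} ‖f(s+h) - f(s)‖^r ds)^(1/r)`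
of a path `f : ℝ → X` (as a supremum in `ℝ`). -/
noncomputable def nikSeminorm (X : Type*) [NormedAddCommGroup X] (T α r : ℝ) (f : ℝ → X) : ℝ :=
  sSup {x : ℝ | ∃ h ∈ Set.Ioc (0 : ℝ) T,
    x = h ^ (-α) * (∫ s in Set.Icc (0 : ℝ) (T - h), ‖f (s + h) - f s‖ ^ r) ^ (1 / r)}

/-- Integral of a nonnegative function is at most the `toReal` of the `ofReal` lintegral. -/
lemma nik_aux_int_le {μ : Measure ℝ} {f : ℝ → ℝ} (hf : ∀ x, 0 ≤ f x) :
    ∫ x, f x ∂μ ≤ (∫⁻ x, ENNReal.ofReal (f x) ∂μ).toReal := by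
  by_cases h : Integrable f μ
  · exact le_of_eq (integral_eq_lintegral_of_nonneg_ae (Filter.Eventually.of_forall hf) h.1)
  · rw [integral_undef h]; exact ENNReal.toReal_nonneg

lemma nik_aux_ofReal_int_le {μ : Measure ℝ} {f : ℝ → ℝ} (hf : ∀ x, 0 ≤ f x) :
    ENNReal.ofReal (∫ x, f x ∂μ) ≤ ∫⁻ x, ENNReal.ofReal (f x) ∂μ := by
  by_cases h : Integrable f μ
  · rw [ofReal_integral_eq_lintegral_ofReal h (Filter.Eventually.of_forall hf)]
  · rw [integral_undef h, ENNReal.ofReal_zero]; exact zero_le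

/-- Translation invariance of the Lebesgue lintegral over an interval. -/
lemma nik_aux_translate (f : ℝ → ENNReal) (a b k : ℝ) :
    ∫⁻ x in Set.Icc a b, f (x + k) = ∫⁻ y in Set.Icc (a + k) (b + k), f y := by
  have h := (measurePreserving_add_right (volume : Measure ℝ) k).setLIntegral_comp_preimage_emb
    (measurableEmbedding_addRight k) f (Set.Icc (a + k) (b + k))
  rw [Set.preimage_add_const_Icc] at h
  simpa using h

/-- Reflection invariance of the Lebesgue lintegral over an interval. -/
lemma nik_aux_neg (f : ℝ → ENNReal) (a b : ℝ) :
    ∫⁻ x in Set.Icc a b, f (-x) = ∫⁻ y in Set.Icc (-b) (-a), f y := by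
  have h := (Measure.measurePreserving_neg (volume : Measure ℝ)).setLIntegral_comp_preimage_emb
    (MeasurableEquiv.neg ℝ).measurableEmbedding f (Set.Icc (-b) (-a))
  have hpre : (Neg.neg : ℝ → ℝ) ⁻¹' Set.Icc (-b) (-a) = Set.Icc a b := by
    ext x; simp [neg_le, le_neg, and_comm]
  rw [hpre] at h
  exact h

set_option maxHeartbeats 1000000 in
/-- **Key integral estimate behind the Nikolskii averaging lemma.** For `u : [0,T] → X`
Bochner `r`-integrable with finite Nikolskii seminorm `[u]`,
`Σ_{m=1}^M τ⁻¹ ∫_{I_m}∫_{I_m} ‖u(s) - u(t)‖^r dt ds ≤ (2^(αr+1)/(αr+1)) τ^(αr) [u]^r`. -/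
theorem nikolskii_key_estimate
    {X : Type*} [NormedAddCommGroup X]
    (α r : ℝ) (hα : α ∈ Set.Ioo (0 : ℝ) 1) (hr : 1 ≤ r)
    (T : ℝ) (hT : 0 < T) (M : ℕ) (hM : 1 ≤ M) (τ : ℝ) (hτ : τ = T / M)
    (u : ℝ → X)
    (hint : MemLp u (ENNReal.ofReal r) (volume.restrict (Set.Icc 0 T)))
    (hfin : BddAbove {x : ℝ | ∃ h ∈ Set.Ioc (0 : ℝ) T,
      x = h ^ (-α) * (∫ s in Set.Icc (0 : ℝ) (T - h), ‖u (s + h) - u s‖ ^ r) ^ (1 / r)}) :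
    ∑ m ∈ Finset.Icc 1 M, τ⁻¹ *
        ∫ s in Set.Icc (((m : ℝ) - 1) * τ) ((m : ℝ) * τ),
          (∫ t in Set.Icc (((m : ℝ) - 1) * τ) ((m : ℝ) * τ), ‖u s - u t‖ ^ r)
      ≤ (2 ^ (α * r + 1) / (α * r + 1)) * τ ^ (α * r) * (nikSeminorm X T α r u) ^ r := by
  classical
  obtain ⟨hα0, hα1⟩ := hα
  have hr0 : (0 : ℝ) < r := lt_of_lt_of_le one_pos hr
  set p : ℝ := α * r with hp_def
  have hp : 0 < p := mul_pos hα0 hr0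
  have hM0 : (0 : ℝ) < (M : ℝ) := by exact_mod_cast Nat.lt_of_lt_of_le Nat.zero_lt_one hM
  have hτ0 : 0 < τ := by rw [hτ]; exact div_pos hT hM0
  have hM1 : (1 : ℝ) ≤ (M : ℝ) := by exact_mod_cast hM
  have hτT : τ ≤ T := by
    rw [hτ]; exact div_le_self hT.le hM1
  have hMτ : (M : ℝ) * τ = T := by
    rw [hτ]; field_simp
  set nik : ℝ := nikSeminorm X T α r u with hnik_def
  set A : Set ℝ := {x : ℝ | ∃ h ∈ Set.Ioc (0 : ℝ) T,
      x = h ^ (-α) * (∫ s in Set.Icc (0 : ℝ) (T - h), ‖u (s + h) - u s‖ ^ r) ^ (1 / r)} with hA_def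
  have hnik_sSup : nik = sSup A := rfl
  have hzero_mem : (0 : ℝ) ∈ A := by
    refine ⟨T, ⟨hT, le_rfl⟩, ?_⟩
    rw [sub_self]
    have : (volume.restrict (Set.Icc (0:ℝ) 0)) = 0 := by
      rw [Measure.restrict_eq_zero]
      simp
    rw [this, integral_zero_measure, Real.zero_rpow (by positivity), mul_zero]
  have hnik0 : 0 ≤ nik := le_csSup hfin hzero_mem
  have hc0 : 0 ≤ nik ^ r := Real.rpow_nonneg hnik0 r
  set c : ℝ := nik ^ r with hc_def
  -- the strongly measurable representative
  set g : ℝ → X := (hint.1).mk u with hg_def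
  have hg_sm : StronglyMeasurable g := hint.1.stronglyMeasurable_mk
  have hug : u =ᵐ[volume.restrict (Set.Icc 0 T)] g := hint.1.ae_eq_mk
  have hug' : ∀ᵐ s ∂(volume : Measure ℝ), s ∈ Set.Icc (0:ℝ) T → u s = g s :=
    (ae_restrict_iff' measurableSet_Icc).mp hug
  have hgmem : MemLp g (ENNReal.ofReal r) (volume.restrict (Set.Icc 0 T)) :=
    MemLp.ae_eq hug hint
  -- finiteness of the r-th power lintegral of g
  have hGfin : ∫⁻ s in Set.Icc (0:ℝ) T, ENNReal.ofReal (‖g s‖ ^ r) < ⊤ := by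
    have h1 : eLpNorm g (ENNReal.ofReal r) (volume.restrict (Set.Icc 0 T)) < ⊤ := hgmem.2
    rw [eLpNorm_eq_lintegral_rpow_enorm_toReal (ENNReal.ofReal_pos.mpr hr0).ne' ENNReal.ofReal_ne_top] at h1
    rw [ENNReal.toReal_ofReal hr0.le] at h1
    have h2 : ∫⁻ s in Set.Icc (0:ℝ) T, ‖g s‖ₑ ^ r < ⊤ := by
      by_contra hcon
      push_neg at hcon
      rw [top_le_iff.mp hcon] at h1
      rw [ENNReal.top_rpow_of_pos (by positivity)] at h1
      exact (lt_irrefl _ h1).elim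
    refine lt_of_eq_of_lt ?_ h2
    refine lintegral_congr fun s => ?_
    rw [← ofReal_norm, ENNReal.ofReal_rpow_of_nonneg (norm_nonneg _) hr0.le]
  -- measurability helpers
  have hrpow_cont : Continuous fun x : ℝ => x ^ r := by
    rw [continuous_iff_continuousAt]
    intro x
    exact Real.continuousAt_rpow_const x r (Or.inr hr0.le)
  have hrpow_meas : Measurable fun x : ℝ => x ^ r := hrpow_cont.measurable
  have hppow_cont : Continuous fun x : ℝ => x ^ p := by
    rw [continuous_iff_continuousAt]
    intro x
    exact Real.continuousAt_rpow_const x p (Or.inr hp.le)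
  have hg2 : ∀ k : ℝ, StronglyMeasurable fun s => g (s + k) := fun k =>
    hg_sm.comp_measurable (measurable_add_const k)
  have hmeas_diff : ∀ k : ℝ, Measurable fun s => ENNReal.ofReal (‖g (s + k) - g s‖ ^ r) := by
    intro k
    exact ENNReal.measurable_ofReal.comp
      (hrpow_meas.comp (((hg2 k).sub hg_sm).norm.measurable))
  -- KEY: estimate the shifted integral by the seminorm
  have hkey : ∀ h : ℝ, 0 < h → h ≤ T →
      ∫⁻ s in Set.Icc (0:ℝ) (T - h), ENNReal.ofReal (‖g (s + h) - g s‖ ^ r)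
        ≤ ENNReal.ofReal (h ^ p * c) := by
    intro h h0 hhT
    have hsub : Set.Icc (0:ℝ) (T - h) ⊆ Set.Icc (0:ℝ) T :=
      Set.Icc_subset_Icc le_rfl (by linarith)
    have hae1 : ∀ᵐ s ∂(volume : Measure ℝ), s ∈ Set.Icc (0:ℝ) (T - h) → u s = g s :=
      hug'.mono fun s hs hmem => hs (hsub hmem)
    have hae2 : ∀ᵐ s ∂(volume : Measure ℝ), s ∈ Set.Icc (0:ℝ) (T - h) → u (s + h) = g (s + h) := by
      have := (measurePreserving_add_right (volume : Measure ℝ) h).quasiMeasurePreserving.ae hug'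
      refine this.mono fun s hs hmem => hs ?_
      constructor
      · have := hmem.1; linarith
      · have := hmem.2; linarith
    have hint_eq : ∫ s in Set.Icc (0:ℝ) (T - h), ‖u (s + h) - u s‖ ^ r
        = ∫ s in Set.Icc (0:ℝ) (T - h), ‖g (s + h) - g s‖ ^ r := by
      refine integral_congr_ae ((ae_restrict_iff' measurableSet_Icc).mpr ?_)
      filter_upwards [hae1, hae2] with s h1 h2 hmem
      rw [h1 hmem, h2 hmem]
    -- integrability of the g-version
    have hptw : ∀ a b : X, ‖a - b‖ ^ r ≤ 2 ^ r * (‖a‖ ^ r + ‖b‖ ^ r) := by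
      intro a b
      have h1 : ‖a - b‖ ≤ 2 * max ‖a‖ ‖b‖ := by
        refine (norm_sub_le a b).trans ?_
        have := le_max_left ‖a‖ ‖b‖
        have := le_max_right ‖a‖ ‖b‖
        linarith
      calc ‖a - b‖ ^ r ≤ (2 * max ‖a‖ ‖b‖) ^ r :=
            Real.rpow_le_rpow (norm_nonneg _) h1 hr0.le
        _ = 2 ^ r * (max ‖a‖ ‖b‖) ^ r := by
            rw [Real.mul_rpow (by norm_num) (le_max_of_le_left (norm_nonneg _))]
        _ ≤ 2 ^ r * (‖a‖ ^ r + ‖b‖ ^ r) := by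
            have h2 : (max ‖a‖ ‖b‖) ^ r ≤ ‖a‖ ^ r + ‖b‖ ^ r := by
              rcases max_choice ‖a‖ ‖b‖ with hm | hm <;> rw [hm]
              · nlinarith [Real.rpow_nonneg (norm_nonneg b) r]
              · nlinarith [Real.rpow_nonneg (norm_nonneg a) r]
            have : (0:ℝ) ≤ 2 ^ r := by positivity
            nlinarith
    have hlin_fin : ∫⁻ s in Set.Icc (0:ℝ) (T - h), ENNReal.ofReal (‖g (s + h) - g s‖ ^ r) < ⊤ := by
      have hb : ∫⁻ s in Set.Icc (0:ℝ) (T - h), ENNReal.ofReal (‖g (s + h) - g s‖ ^ r)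
          ≤ ∫⁻ s in Set.Icc (0:ℝ) (T - h),
              (ENNReal.ofReal (2 ^ r) *
                (ENNReal.ofReal (‖g (s + h)‖ ^ r) + ENNReal.ofReal (‖g s‖ ^ r))) := by
        refine lintegral_mono fun s => ?_
        calc ENNReal.ofReal (‖g (s + h) - g s‖ ^ r)
            ≤ ENNReal.ofReal (2 ^ r * (‖g (s + h)‖ ^ r + ‖g s‖ ^ r)) :=
              ENNReal.ofReal_le_ofReal (hptw _ _)
          _ = ENNReal.ofReal (2 ^ r) * (ENNReal.ofReal (‖g (s + h)‖ ^ r) + ENNReal.ofReal (‖g s‖ ^ r)) := by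
              rw [ENNReal.ofReal_mul (by positivity), ENNReal.ofReal_add (by positivity) (by positivity)]
      refine lt_of_le_of_lt hb ?_
      have hG1m : Measurable fun s : ℝ => ENNReal.ofReal (‖g (s + h)‖ ^ r) :=
        ENNReal.measurable_ofReal.comp (hrpow_meas.comp (hg2 h).norm.measurable)
      have hG2m : Measurable fun s : ℝ => ENNReal.ofReal (‖g s‖ ^ r) :=
        ENNReal.measurable_ofReal.comp (hrpow_meas.comp hg_sm.norm.measurable)
      rw [lintegral_const_mul (f := fun s => ENNReal.ofReal (‖g (s + h)‖ ^ r) + ENNReal.ofReal (‖g s‖ ^ r)) _ (hG1m.add hG2m), lintegral_add_left hG1m]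
      refine ENNReal.mul_lt_top ENNReal.ofReal_lt_top (ENNReal.add_lt_top.mpr ⟨?_, ?_⟩)
      · have htr : ∫⁻ s in Set.Icc (0:ℝ) (T - h), ENNReal.ofReal (‖g (s + h)‖ ^ r)
            = ∫⁻ y in Set.Icc (0 + h) (T - h + h), ENNReal.ofReal (‖g y‖ ^ r) :=
          nik_aux_translate (fun y => ENNReal.ofReal (‖g y‖ ^ r)) 0 (T - h) h
        rw [htr]
        refine lt_of_le_of_lt (lintegral_mono_set ?_) hGfin
        refine Set.Icc_subset_Icc (by linarith) (by linarith)
      · exact lt_of_le_of_lt (lintegral_mono_set hsub) hGfin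
    have hInt : Integrable (fun s => ‖g (s + h) - g s‖ ^ r)
        (volume.restrict (Set.Icc (0:ℝ) (T - h))) := by
      constructor
      · exact (hrpow_meas.comp (((hg2 h).sub hg_sm).norm.measurable)).aestronglyMeasurable
      · rw [hasFiniteIntegral_iff_ofReal (Filter.Eventually.of_forall fun s => by positivity)]
        exact hlin_fin
    -- the seminorm bound
    set Ag : ℝ := ∫ s in Set.Icc (0:ℝ) (T - h), ‖g (s + h) - g s‖ ^ r with hAg_def
    have hAg0 : 0 ≤ Ag := integral_nonneg fun s => by positivity
    have hmem : h ^ (-α) * Ag ^ (1 / r) ∈ A := by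
      refine ⟨h, ⟨h0, hhT⟩, ?_⟩
      rw [hint_eq]
    have hle : h ^ (-α) * Ag ^ (1 / r) ≤ nik := le_csSup hfin hmem
    have hha : (0:ℝ) < h ^ α := Real.rpow_pos_of_pos h0 α
    have hle2 : Ag ^ (1 / r) ≤ h ^ α * nik := by
      have := mul_le_mul_of_nonneg_left hle hha.le
      calc Ag ^ (1 / r) = h ^ α * (h ^ (-α) * Ag ^ (1 / r)) := by
            rw [← mul_assoc, ← Real.rpow_add h0, add_neg_cancel, Real.rpow_zero, one_mul]
        _ ≤ h ^ α * nik := this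
    have hle3 : Ag ≤ h ^ p * c := by
      have h1 : Ag = (Ag ^ (1 / r)) ^ r := by
        rw [← Real.rpow_mul hAg0, one_div, inv_mul_cancel₀ hr0.ne', Real.rpow_one]
      rw [h1]
      calc (Ag ^ (1 / r)) ^ r ≤ (h ^ α * nik) ^ r :=
            Real.rpow_le_rpow (Real.rpow_nonneg hAg0 _) hle2 hr0.le
        _ = (h ^ α) ^ r * nik ^ r := Real.mul_rpow hha.le hnik0
        _ = h ^ p * c := by rw [← Real.rpow_mul h0.le, hp_def, hc_def]
    calc ∫⁻ s in Set.Icc (0:ℝ) (T - h), ENNReal.ofReal (‖g (s + h) - g s‖ ^ r)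
        = ENNReal.ofReal Ag := by
          rw [hAg_def, ofReal_integral_eq_lintegral_ofReal hInt
            (Filter.Eventually.of_forall fun s => by positivity)]
      _ ≤ ENNReal.ofReal (h ^ p * c) := ENNReal.ofReal_le_ofReal hle3
  -- the indicator kernel
  set S : Set (ℝ × ℝ) := {q : ℝ × ℝ | q.1 ∈ Set.Icc (0:ℝ) T ∧ q.1 + q.2 ∈ Set.Icc (0:ℝ) T}
    with hS_def
  have hS_meas : MeasurableSet S := by
    have : S = (Prod.fst ⁻¹' Set.Icc (0:ℝ) T) ∩ ((fun q : ℝ × ℝ => q.1 + q.2) ⁻¹' Set.Icc (0:ℝ) T) := rfl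
    rw [this]
    exact (measurable_fst measurableSet_Icc).inter
      ((measurable_fst.add measurable_snd) measurableSet_Icc)
  set Ψ : ℝ × ℝ → ENNReal := S.indicator (fun q => ENNReal.ofReal (‖g (q.1 + q.2) - g q.1‖ ^ r))
    with hΨ_def
  have hΨ_meas : Measurable Ψ := by
    refine Measurable.indicator ?_ hS_meas
    have h1 : StronglyMeasurable fun q : ℝ × ℝ => g (q.1 + q.2) :=
      hg_sm.comp_measurable (measurable_fst.add measurable_snd)
    have h2 : StronglyMeasurable fun q : ℝ × ℝ => g q.1 :=
      hg_sm.comp_measurable measurable_fst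
    exact ENNReal.measurable_ofReal.comp (hrpow_meas.comp (h1.sub h2).norm.measurable)
  -- per-h bound of the kernel integral
  have hW : ∀ h : ℝ, h ∈ Set.Icc (-τ) τ →
      ∫⁻ s, Ψ (s, h) ≤ ENNReal.ofReal (|h| ^ p * c) := by
    intro h hh
    have hrw : (fun s => Ψ (s, h))
        = ({s : ℝ | s ∈ Set.Icc (0:ℝ) T ∧ s + h ∈ Set.Icc (0:ℝ) T}).indicator
          (fun s => ENNReal.ofReal (‖g (s + h) - g s‖ ^ r)) := by
      funext s
      simp only [hΨ_def, hS_def, Set.indicator_apply, Set.mem_setOf_eq]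
    have hWmeas : MeasurableSet {s : ℝ | s ∈ Set.Icc (0:ℝ) T ∧ s + h ∈ Set.Icc (0:ℝ) T} := by
      have : {s : ℝ | s ∈ Set.Icc (0:ℝ) T ∧ s + h ∈ Set.Icc (0:ℝ) T}
          = Set.Icc (0:ℝ) T ∩ ((fun s => s + h) ⁻¹' Set.Icc (0:ℝ) T) := rfl
      rw [this]
      exact measurableSet_Icc.inter ((measurable_add_const h) measurableSet_Icc)
    rw [hrw, lintegral_indicator hWmeas]
    rcases lt_trichotomy h 0 with hneg | hzero | hpos
    · -- negative h
      have hWset : {s : ℝ | s ∈ Set.Icc (0:ℝ) T ∧ s + h ∈ Set.Icc (0:ℝ) T} = Set.Icc (-h) T := by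
        ext s
        simp only [Set.mem_setOf_eq, Set.mem_Icc]
        constructor
        · rintro ⟨⟨h1, h2⟩, ⟨h3, h4⟩⟩; exact ⟨by linarith, h2⟩
        · rintro ⟨h1, h2⟩
          have hhτ : -τ ≤ h := hh.1
          exact ⟨⟨by linarith, h2⟩, ⟨by linarith, by linarith⟩⟩
      rw [hWset]
      -- substitute x = s + h, i.e. s = x + (-h)
      have hsub : ∫⁻ s in Set.Icc (-h) T, ENNReal.ofReal (‖g (s + h) - g s‖ ^ r)
          = ∫⁻ x in Set.Icc (0:ℝ) (T + h), ENNReal.ofReal (‖g (x + -h + h) - g (x + -h)‖ ^ r) := by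
        have := nik_aux_translate (fun s => ENNReal.ofReal (‖g (s + h) - g s‖ ^ r)) 0 (T + h) (-h)
        rw [this]
        norm_num
      rw [hsub]
      have hcongr : ∫⁻ x in Set.Icc (0:ℝ) (T + h), ENNReal.ofReal (‖g (x + -h + h) - g (x + -h)‖ ^ r)
          = ∫⁻ x in Set.Icc (0:ℝ) (T - -h), ENNReal.ofReal (‖g (x + -h) - g x‖ ^ r) := by
        have hTh : T + h = T - -h := by ring
        rw [hTh]
        refine lintegral_congr fun x => ?_
        have : x + -h + h = x := by ring
        rw [this, norm_sub_rev]
      rw [hcongr]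
      have := hkey (-h) (by linarith) (by have := hh.1; linarith)
      refine this.trans ?_
      rw [abs_of_neg hneg]
    · -- h = 0
      subst hzero
      have : ∀ s : ℝ, ENNReal.ofReal (‖g (s + 0) - g s‖ ^ r) = 0 := by
        intro s
        rw [add_zero, sub_self, norm_zero, Real.zero_rpow hr0.ne', ENNReal.ofReal_zero]
      calc ∫⁻ s in {s : ℝ | s ∈ Set.Icc (0:ℝ) T ∧ s + 0 ∈ Set.Icc (0:ℝ) T},
            ENNReal.ofReal (‖g (s + 0) - g s‖ ^ r)
          = ∫⁻ _ in {s : ℝ | s ∈ Set.Icc (0:ℝ) T ∧ s + 0 ∈ Set.Icc (0:ℝ) T}, 0 := by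
            exact lintegral_congr fun s => this s
        _ = 0 := lintegral_zero
        _ ≤ _ := zero_le
    · -- positive h
      have hWset : {s : ℝ | s ∈ Set.Icc (0:ℝ) T ∧ s + h ∈ Set.Icc (0:ℝ) T}
          = Set.Icc (0:ℝ) (T - h) := by
        ext s
        simp only [Set.mem_setOf_eq, Set.mem_Icc]
        constructor
        · rintro ⟨⟨h1, h2⟩, ⟨h3, h4⟩⟩; exact ⟨h1, by linarith⟩
        · rintro ⟨h1, h2⟩
          exact ⟨⟨h1, by linarith⟩, ⟨by linarith, by linarith⟩⟩
      rw [hWset]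
      have := hkey h hpos (le_trans hh.2 hτT)
      refine this.trans ?_
      rw [abs_of_pos hpos]
  -- the inner double integral: per m
  have hinner : ∀ m : ℕ, m ∈ Finset.Icc 1 M → ∀ s ∈ Set.Icc (((m:ℝ) - 1) * τ) ((m:ℝ) * τ),
      ∫⁻ t in Set.Icc (((m:ℝ) - 1) * τ) ((m:ℝ) * τ), ENNReal.ofReal (‖g s - g t‖ ^ r)
        ≤ ∫⁻ h in Set.Icc (-τ) τ, Ψ (s, h) := by
    intro m hm s hs
    rw [Finset.mem_Icc] at hm
    have hm1 : (1:ℝ) ≤ (m:ℝ) := by exact_mod_cast hm.1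
    have hmM : (m:ℝ) ≤ (M:ℝ) := by exact_mod_cast hm.2
    have hImsub : Set.Icc (((m:ℝ) - 1) * τ) ((m:ℝ) * τ) ⊆ Set.Icc (0:ℝ) T := by
      refine Set.Icc_subset_Icc (by nlinarith) ?_
      calc (m:ℝ) * τ ≤ (M:ℝ) * τ := by nlinarith
        _ = T := hMτ
    have htr : ∫⁻ t in Set.Icc (((m:ℝ) - 1) * τ) ((m:ℝ) * τ), ENNReal.ofReal (‖g s - g t‖ ^ r)
        = ∫⁻ x in Set.Icc (((m:ℝ) - 1) * τ - s) ((m:ℝ) * τ - s),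
            ENNReal.ofReal (‖g s - g (x + s)‖ ^ r) := by
      have h := nik_aux_translate (fun t => ENNReal.ofReal (‖g s - g t‖ ^ r))
        (((m:ℝ) - 1) * τ - s) ((m:ℝ) * τ - s) s
      rw [h]
      norm_num
    rw [htr]
    have hcongr : ∫⁻ x in Set.Icc (((m:ℝ) - 1) * τ - s) ((m:ℝ) * τ - s),
          ENNReal.ofReal (‖g s - g (x + s)‖ ^ r)
        = ∫⁻ x in Set.Icc (((m:ℝ) - 1) * τ - s) ((m:ℝ) * τ - s), Ψ (s, x) := by
      refine setLIntegral_congr_fun measurableSet_Icc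
        (fun x hx => ?_)
      have hsx : s + x ∈ Set.Icc (((m:ℝ) - 1) * τ) ((m:ℝ) * τ) := by
        rcases hx with ⟨hx1, hx2⟩
        constructor <;> [linarith; linarith]
      have hmem : (s, x) ∈ S := ⟨hImsub hs, hImsub hsx⟩
      rw [hΨ_def, Set.indicator_of_mem hmem]
      simp only
      rw [norm_sub_rev]
      congr 2
      ring_nf
    rw [hcongr]
    refine lintegral_mono_set ?_
    rcases hs with ⟨hs1, hs2⟩
    intro x hx
    rcases hx with ⟨hx1, hx2⟩
    constructor
    · have : ((m:ℝ) - 1) * τ - s ≥ -τ := by nlinarith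
      linarith
    · have : (m:ℝ) * τ - s ≤ τ := by nlinarith
      linarith
  -- Φ and its measurability
  set Φ : ℝ → ENNReal := fun s => ∫⁻ h in Set.Icc (-τ) τ, Ψ (s, h) with hΦ_def
  have hΦ_meas : Measurable Φ := by
    have : Function.uncurry (fun s h : ℝ => Ψ (s, h)) = Ψ := by
      funext q; rfl
    exact Measurable.lintegral_prod_right (f := fun s h => Ψ (s, h)) (by rw [this]; exact hΨ_meas)
  -- sum over m bounded by total integral of Φ
  set B : ℕ → ENNReal := fun m =>
    ∫⁻ s in Set.Icc (((m:ℝ) - 1) * τ) ((m:ℝ) * τ),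
      ∫⁻ t in Set.Icc (((m:ℝ) - 1) * τ) ((m:ℝ) * τ), ENNReal.ofReal (‖g s - g t‖ ^ r)
    with hB_def
  have hsumB : ∑ m ∈ Finset.Icc 1 M, B m ≤ ∫⁻ s, Φ s := by
    have hstep : ∀ m ∈ Finset.Icc 1 M, B m ≤ ∫⁻ s in Set.Icc (((m:ℝ) - 1) * τ) ((m:ℝ) * τ), Φ s := by
      intro m hm
      exact setLIntegral_mono hΦ_meas (fun s hs => hinner m hm s hs)
    calc ∑ m ∈ Finset.Icc 1 M, B m
        ≤ ∑ m ∈ Finset.Icc 1 M, ∫⁻ s in Set.Icc (((m:ℝ) - 1) * τ) ((m:ℝ) * τ), Φ s :=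
          Finset.sum_le_sum hstep
      _ = ∑ m ∈ Finset.Icc 1 M, ∫⁻ s in Set.Ioc (((m:ℝ) - 1) * τ) ((m:ℝ) * τ), Φ s := by
          refine Finset.sum_congr rfl fun m _ => ?_
          rw [Measure.restrict_congr_set Ioc_ae_eq_Icc]
      _ = ∫⁻ s in ⋃ m ∈ Finset.Icc 1 M, Set.Ioc (((m:ℝ) - 1) * τ) ((m:ℝ) * τ), Φ s := by
          refine (lintegral_biUnion_finset ?_ (fun m _ => measurableSet_Ioc) Φ).symm
          intro m₁ hm₁ m₂ hm₂ hne
          have : ((m₁:ℝ) ≠ (m₂:ℝ)) := by exact_mod_cast hne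
          rw [Function.onFun, Set.disjoint_left]
          intro x hx₁ hx₂
          rcases hx₁ with ⟨ha₁, hb₁⟩
          rcases hx₂ with ⟨ha₂, hb₂⟩
          rcases lt_or_gt_of_ne hne with hlt | hlt
          · have : (m₁:ℝ) ≤ (m₂:ℝ) - 1 := by
              have : (m₁:ℝ) + 1 ≤ (m₂:ℝ) := by exact_mod_cast hlt
              linarith
            nlinarith
          · have : (m₂:ℝ) ≤ (m₁:ℝ) - 1 := by
              have : (m₂:ℝ) + 1 ≤ (m₁:ℝ) := by exact_mod_cast hlt
              linarith
            nlinarith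
      _ ≤ ∫⁻ s, Φ s := by
          exact lintegral_mono' Measure.restrict_le_self le_rfl
  -- swap and bound
  have hswap : ∫⁻ s, Φ s ≤ ∫⁻ h in Set.Icc (-τ) τ, ENNReal.ofReal (|h| ^ p * c) := by
    have huncurry : Function.uncurry (fun s h : ℝ => Ψ (s, h)) = Ψ := by funext q; rfl
    have hsw : ∫⁻ s, Φ s = ∫⁻ h in Set.Icc (-τ) τ, ∫⁻ s, Ψ (s, h) := by
      rw [hΦ_def]
      exact lintegral_lintegral_swap (by rw [huncurry]; exact hΨ_meas.aemeasurable)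
    rw [hsw]
    refine setLIntegral_mono ?_ (fun h hh => hW h hh)
    exact ENNReal.measurable_ofReal.comp
      (((hppow_cont.comp continuous_abs).mul continuous_const).measurable)
  -- compute the h-integral
  have hIval : ∫⁻ h in Set.Icc (-τ) τ, ENNReal.ofReal (|h| ^ p * c)
      ≤ 2 * ENNReal.ofReal (τ ^ (p + 1) / (p + 1) * c) := by
    have hle1 : ∫⁻ h in Set.Icc (-τ) τ, ENNReal.ofReal (|h| ^ p * c)
        ≤ (∫⁻ h in Set.Icc (-τ) 0, ENNReal.ofReal (|h| ^ p * c))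
          + ∫⁻ h in Set.Ioc (0:ℝ) τ, ENNReal.ofReal (|h| ^ p * c) := by
      rw [← Set.Icc_union_Ioc_eq_Icc (by linarith) hτ0.le]
      exact lintegral_union_le _ _ _
    have hpiece : ∫⁻ h in Set.Icc (0:ℝ) τ, ENNReal.ofReal (|h| ^ p * c)
        = ENNReal.ofReal (τ ^ (p + 1) / (p + 1) * c) := by
      have hcongr : ∫⁻ h in Set.Icc (0:ℝ) τ, ENNReal.ofReal (|h| ^ p * c)
          = ∫⁻ h in Set.Icc (0:ℝ) τ, ENNReal.ofReal (h ^ p * c) := by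
        refine setLIntegral_congr_fun measurableSet_Icc
          (fun h hh => ?_)
        rw [abs_of_nonneg hh.1]
      rw [hcongr]
      have hcont : Continuous fun x : ℝ => x ^ p * c := hppow_cont.mul continuous_const
      have hIg : Integrable (fun x : ℝ => x ^ p * c) (volume.restrict (Set.Icc (0:ℝ) τ)) :=
        hcont.integrableOn_Icc
      rw [← ofReal_integral_eq_lintegral_ofReal hIg
        ((ae_restrict_iff' measurableSet_Icc).mpr (Filter.Eventually.of_forall fun x hx => by
          have := hx.1
          positivity))]
      congr 1
      rw [integral_mul_const]
      congr 1
      rw [integral_Icc_eq_integral_Ioc, ← intervalIntegral.integral_of_le hτ0.le,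
        integral_rpow (Or.inl (by linarith))]
      rw [Real.zero_rpow (by linarith), sub_zero]
    have hpiece1 : ∫⁻ h in Set.Icc (-τ) 0, ENNReal.ofReal (|h| ^ p * c)
        = ∫⁻ h in Set.Icc (0:ℝ) τ, ENNReal.ofReal (|h| ^ p * c) := by
      have := nik_aux_neg (fun h => ENNReal.ofReal (|h| ^ p * c)) 0 τ
      rw [neg_zero] at this
      rw [← this]
      refine lintegral_congr fun x => ?_
      rw [abs_neg]
    have hpiece2 : ∫⁻ h in Set.Ioc (0:ℝ) τ, ENNReal.ofReal (|h| ^ p * c)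
        ≤ ∫⁻ h in Set.Icc (0:ℝ) τ, ENNReal.ofReal (|h| ^ p * c) :=
      lintegral_mono_set Set.Ioc_subset_Icc_self
    calc ∫⁻ h in Set.Icc (-τ) τ, ENNReal.ofReal (|h| ^ p * c)
        ≤ (∫⁻ h in Set.Icc (-τ) 0, ENNReal.ofReal (|h| ^ p * c))
          + ∫⁻ h in Set.Ioc (0:ℝ) τ, ENNReal.ofReal (|h| ^ p * c) := hle1
      _ ≤ ENNReal.ofReal (τ ^ (p + 1) / (p + 1) * c)
          + ENNReal.ofReal (τ ^ (p + 1) / (p + 1) * c) := by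
          refine add_le_add ?_ ?_
          · rw [hpiece1, hpiece]
          · rw [← hpiece]; exact hpiece2
      _ = 2 * ENNReal.ofReal (τ ^ (p + 1) / (p + 1) * c) := (two_mul _).symm
  -- main ENNReal bound
  have hRHS0 : 0 ≤ 2 ^ (p + 1) / (p + 1) * τ ^ p * c := by positivity
  have hSB : ∑ m ∈ Finset.Icc 1 M, ENNReal.ofReal τ⁻¹ * B m
      ≤ ENNReal.ofReal (2 ^ (p + 1) / (p + 1) * τ ^ p * c) := by
    rw [← Finset.mul_sum]
    calc ENNReal.ofReal τ⁻¹ * ∑ m ∈ Finset.Icc 1 M, B m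
        ≤ ENNReal.ofReal τ⁻¹ * (2 * ENNReal.ofReal (τ ^ (p + 1) / (p + 1) * c)) := by
          exact mul_le_mul_right ((hsumB.trans hswap).trans hIval) _
      _ = ENNReal.ofReal (τ⁻¹ * (2 * (τ ^ (p + 1) / (p + 1) * c))) := by
          rw [ENNReal.ofReal_mul (by positivity : (0:ℝ) ≤ τ⁻¹),
              ENNReal.ofReal_mul (by norm_num : (0:ℝ) ≤ 2),
              ENNReal.ofReal_mul (by positivity : (0:ℝ) ≤ τ ^ (p + 1) / (p + 1)),
              ENNReal.ofReal_ofNat]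
      _ ≤ ENNReal.ofReal (2 ^ (p + 1) / (p + 1) * τ ^ p * c) := by
          refine ENNReal.ofReal_le_ofReal ?_
          have h1 : τ ^ (p + 1) = τ ^ p * τ := by
            rw [Real.rpow_add hτ0, Real.rpow_one]
          have h2 : (2:ℝ) ≤ 2 ^ (p + 1) := by
            calc (2:ℝ) = 2 ^ (1:ℝ) := (Real.rpow_one 2).symm
              _ ≤ 2 ^ (p + 1) := Real.rpow_le_rpow_of_exponent_le (by norm_num) (by linarith)
          have hτp : (0:ℝ) ≤ τ ^ p := Real.rpow_nonneg hτ0.le p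
          have hp1 : (0:ℝ) < p + 1 := by linarith
          have heq : τ⁻¹ * (2 * (τ ^ (p + 1) / (p + 1) * c)) = 2 / (p + 1) * τ ^ p * c := by
            rw [h1]; field_simp
          rw [heq]
          have hdiv : 2 / (p + 1) ≤ 2 ^ (p + 1) / (p + 1) := by gcongr
          exact mul_le_mul_of_nonneg_right (mul_le_mul_of_nonneg_right hdiv hτp) hc0
  -- finiteness of each B m
  have hBfin : ∀ m ∈ Finset.Icc 1 M, B m ≠ ⊤ := by
    intro m hm
    intro htop
    have h1 : ENNReal.ofReal τ⁻¹ * B m ≤ ∑ m' ∈ Finset.Icc 1 M, ENNReal.ofReal τ⁻¹ * B m' :=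
      Finset.single_le_sum (f := fun m' => ENNReal.ofReal τ⁻¹ * B m') (fun _ _ => zero_le) hm
    have h2 : ENNReal.ofReal τ⁻¹ * B m = ⊤ := by
      rw [htop, ENNReal.mul_top]
      simpa [ENNReal.ofReal_eq_zero] using (inv_pos.mpr hτ0)
    rw [h2, top_le_iff] at h1
    have := hSB
    rw [h1] at this
    exact (ENNReal.ofReal_ne_top (top_le_iff.mp this)).elim
  -- now the real side
  have hum : ∀ m : ℕ, m ∈ Finset.Icc 1 M →
      ∫ s in Set.Icc (((m:ℝ) - 1) * τ) ((m:ℝ) * τ),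
        (∫ t in Set.Icc (((m:ℝ) - 1) * τ) ((m:ℝ) * τ), ‖u s - u t‖ ^ r)
      = ∫ s in Set.Icc (((m:ℝ) - 1) * τ) ((m:ℝ) * τ),
        (∫ t in Set.Icc (((m:ℝ) - 1) * τ) ((m:ℝ) * τ), ‖g s - g t‖ ^ r) := by
    intro m hm
    rw [Finset.mem_Icc] at hm
    have hm1 : (1:ℝ) ≤ (m:ℝ) := by exact_mod_cast hm.1
    have hmM : (m:ℝ) ≤ (M:ℝ) := by exact_mod_cast hm.2
    have hImsub : Set.Icc (((m:ℝ) - 1) * τ) ((m:ℝ) * τ) ⊆ Set.Icc (0:ℝ) T := by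
      refine Set.Icc_subset_Icc (by nlinarith) ?_
      calc (m:ℝ) * τ ≤ (M:ℝ) * τ := by nlinarith
        _ = T := hMτ
    refine integral_congr_ae ((ae_restrict_iff' measurableSet_Icc).mpr ?_)
    filter_upwards [hug'] with s hs hsm
    have hgs : u s = g s := hs (hImsub hsm)
    rw [hgs]
    refine integral_congr_ae ((ae_restrict_iff' measurableSet_Icc).mpr ?_)
    filter_upwards [hug'] with t ht htm
    rw [ht (hImsub htm)]
  have hperm : ∀ m ∈ Finset.Icc 1 M,
      ∫ s in Set.Icc (((m:ℝ) - 1) * τ) ((m:ℝ) * τ),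
        (∫ t in Set.Icc (((m:ℝ) - 1) * τ) ((m:ℝ) * τ), ‖g s - g t‖ ^ r) ≤ (B m).toReal := by
    intro m hm
    have step1 : ∫ s in Set.Icc (((m:ℝ) - 1) * τ) ((m:ℝ) * τ),
          (∫ t in Set.Icc (((m:ℝ) - 1) * τ) ((m:ℝ) * τ), ‖g s - g t‖ ^ r)
        ≤ (∫⁻ s in Set.Icc (((m:ℝ) - 1) * τ) ((m:ℝ) * τ),
            ENNReal.ofReal (∫ t in Set.Icc (((m:ℝ) - 1) * τ) ((m:ℝ) * τ), ‖g s - g t‖ ^ r)).toReal :=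
      nik_aux_int_le fun s => integral_nonneg fun t => by positivity
    refine step1.trans ?_
    refine ENNReal.toReal_mono (hBfin m hm) ?_
    refine lintegral_mono fun s => ?_
    exact nik_aux_ofReal_int_le fun t => by positivity
  calc ∑ m ∈ Finset.Icc 1 M, τ⁻¹ *
        ∫ s in Set.Icc (((m : ℝ) - 1) * τ) ((m : ℝ) * τ),
          (∫ t in Set.Icc (((m : ℝ) - 1) * τ) ((m : ℝ) * τ), ‖u s - u t‖ ^ r)
      ≤ ∑ m ∈ Finset.Icc 1 M, (ENNReal.ofReal τ⁻¹ * B m).toReal := by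
        refine Finset.sum_le_sum fun m hm => ?_
        rw [hum m hm]
        rw [ENNReal.toReal_mul, ENNReal.toReal_ofReal (by positivity)]
        exact mul_le_mul_of_nonneg_left (hperm m hm) (by positivity)
    _ = (∑ m ∈ Finset.Icc 1 M, ENNReal.ofReal τ⁻¹ * B m).toReal := by
        rw [ENNReal.toReal_sum]
        intro m hm
        exact ENNReal.mul_ne_top ENNReal.ofReal_ne_top (hBfin m hm)
    _ ≤ (ENNReal.ofReal (2 ^ (p + 1) / (p + 1) * τ ^ p * c)).toReal :=
        ENNReal.toReal_mono ENNReal.ofReal_ne_top hSB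
    _ = 2 ^ (p + 1) / (p + 1) * τ ^ p * c := ENNReal.toReal_ofReal hRHS0
    _ = 2 ^ (α * r + 1) / (α * r + 1) * τ ^ (α * r) * nikSeminorm X T α r u ^ r := rfl
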